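/- Let K be a field of characteristic 2, let V be a finite-dimensional K-vector space, and let k ≥ 0. Then there is a well-defined injective K-linear map from the k-th exterior power ⋀^k V to the k-th tensor power V^{⊗k} sending v₁ ∧ ⋯ ∧ v_k to the sum over all permutations σ of {1,…,k} of v_{σ(1)} ⊗ ⋯ ⊗ v_{σ(k)}. In particular, ⋀^k V is isomorphic to a subspace of V^{⊗k}. -/

import Mathlib

open scoped TensorProduct

namespace CharTwoExtAux

open ExteriorAlgebra

set_option linter.unusedSectionVars false

variable (K V : Type) [Field K] [CharP K 2] [AddCommGroup V] [Module K V]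

lemma add_self' {M : Type*} [AddCommGroup M] [Module K M] (x : M) : x + x = 0 := by
  have h2 : (2 : K) = 0 := by exact_mod_cast CharP.cast_eq_zero K 2
  rw [← two_smul K x, h2, zero_smul]

lemma neg_eq' {M : Type*} [AddCommGroup M] [Module K M] (x : M) : -x = x :=
  neg_eq_of_add_eq_zero_left (add_self' K x)

variable (k : ℕ)

/-- The norm multilinear map `v ↦ ∑_σ ⊗ᵢ v (σ i)`. -/
noncomputable def Phi : MultilinearMap K (fun _ : Fin k => V) (⨂[K]^k V) :=
  ∑ σ : Equiv.Perm (Fin k), (PiTensorProduct.tprod K).domDomCongr σ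

lemma Phi_apply (v : Fin k → V) :
    Phi K V k v = ∑ σ : Equiv.Perm (Fin k), PiTensorProduct.tprod K (fun i => v (σ i)) := by
  simp [Phi, MultilinearMap.sum_apply, MultilinearMap.domDomCongr_apply]

/-- In characteristic 2 the norm map is alternating. -/
noncomputable def PhiAlt : V [⋀^Fin k]→ₗ[K] (⨂[K]^k V) :=
  { Phi K V k with
    map_eq_zero_of_eq' := by
      intro v i j hv hij
      show Phi K V k v = 0
      rw [Phi_apply]
      refine Finset.sum_ninvolution (fun σ => Equiv.swap i j * σ) ?_ ?_ (fun _ => Finset.mem_univ _) ?_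
      · intro σ
        have hvv : (fun x => v ((Equiv.swap i j * σ) x)) = fun x => v (σ x) := by
          funext x
          simp only [Equiv.Perm.mul_apply]
          rcases eq_or_ne (σ x) i with h | h
          · rw [h, Equiv.swap_apply_left, hv]
          rcases eq_or_ne (σ x) j with h' | h'
          · rw [h', Equiv.swap_apply_right, ← hv]
          · rw [Equiv.swap_apply_of_ne_of_ne h h']
        rw [hvv]
        exact add_self' K _
      · intro σ _ hc
        have : Equiv.swap i j = 1 := mul_right_cancel (by rw [hc, one_mul])
        have := congrArg (fun e => e i) this
        simp [Equiv.swap_apply_left] at this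
        exact hij this.symm
      · intro σ
        rw [← mul_assoc, Equiv.swap_mul_self, one_mul] }

end CharTwoExtAux

namespace CharTwoExtAux

open ExteriorAlgebra

variable (K V : Type) [Field K] [CharP K 2] [AddCommGroup V] [Module K V] (k : ℕ)

/-- `ιMulti` as an alternating map into the exterior power submodule. -/
noncomputable def E : V [⋀^Fin k]→ₗ[K] (⋀[K]^k V) :=
  (ιMulti K k).codRestrict (⋀[K]^k V) (fun v => ιMulti_range K k (Set.mem_range_self v))

open scoped Classical in
/-- The "pick out strictly monotone words" multilinear map. -/
noncomputable def Gmap {n : ℕ} (b : Module.Basis (Fin n) K V) :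
    MultilinearMap K (fun _ : Fin k => V) (⋀[K]^k V) :=
  ∑ q : Fin k → Fin n,
    if StrictMono q then
      ((MultilinearMap.mkPiAlgebra K (Fin k) K).compLinearMap
        (fun i => b.coord (q i))).smulRight (E K V k (b ∘ q))
    else 0

lemma Gmap_apply_basis {n : ℕ} (b : Module.Basis (Fin n) K V) (p : Fin k → Fin n) :
    Gmap K V k b (fun i => b (p i)) = if StrictMono p then E K V k (b ∘ p) else 0 := by
  classical
  rw [Gmap, MultilinearMap.sum_apply]
  rw [Finset.sum_eq_single p]
  · rw [apply_ite (fun (F : MultilinearMap K (fun _ : Fin k => V) (⋀[K]^k V)) =>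
        F (fun i => b (p i)))]
    rw [MultilinearMap.zero_apply]
    congr 1
    rw [MultilinearMap.smulRight_apply, MultilinearMap.compLinearMap_apply,
      MultilinearMap.mkPiAlgebra_apply]
    have h1 : ∀ i, b.coord (p i) (b (p i)) = 1 := by
      intro i
      simp [Module.Basis.coord_apply, Module.Basis.repr_self]
    simp [h1]
  · intro q _ hq
    obtain ⟨i, hi⟩ := Function.ne_iff.mp hq
    rw [apply_ite (fun (F : MultilinearMap K (fun _ : Fin k => V) (⋀[K]^k V)) =>
      F (fun i => b (p i)))]
    rw [MultilinearMap.zero_apply, MultilinearMap.smulRight_apply,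
      MultilinearMap.compLinearMap_apply, MultilinearMap.mkPiAlgebra_apply]
    have hzero : ∏ j, b.coord (q j) (b (p j)) = 0 := by
      apply Finset.prod_eq_zero (Finset.mem_univ i)
      simp [Module.Basis.coord_apply, Module.Basis.repr_self, Finsupp.single_apply, Ne.symm hi]
    rw [hzero, zero_smul, ite_self]
  · intro h
    exact absurd (Finset.mem_univ p) h

lemma key {n : ℕ} (b : Module.Basis (Fin n) K V) :
    (∑ σ : Equiv.Perm (Fin k), (Gmap K V k b).domDomCongr σ) =
      (E K V k).toMultilinearMap := by
  classical
  refine Module.Basis.ext_multilinear (fun _ => b) ?_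
  intro p
  rw [MultilinearMap.sum_apply]
  have hterm : ∀ σ : Equiv.Perm (Fin k),
      (Gmap K V k b).domDomCongr σ (fun i => b (p i)) =
        if StrictMono (p ∘ σ) then E K V k (b ∘ (p ∘ σ)) else 0 := by
    intro σ
    rw [MultilinearMap.domDomCongr_apply]
    exact Gmap_apply_basis K V k b (p ∘ σ)
  by_cases hp : Function.Injective p
  · have hmono : StrictMono (p ∘ Tuple.sort p) :=
      (Tuple.monotone_sort p).strictMono_of_injective (hp.comp (Equiv.injective _))
    rw [Finset.sum_eq_single (Tuple.sort p)]
    · rw [hterm, if_pos hmono]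
      have hcomp : (b ∘ (p ∘ Tuple.sort p)) = (fun i => b (p i)) ∘ (Tuple.sort p) := rfl
      rw [hcomp, AlternatingMap.map_perm]
      show _ = (E K V k) fun i => b (p i)
      rcases Int.units_eq_one_or (Equiv.Perm.sign (Tuple.sort p)) with h | h
      · rw [h, one_smul]
      · rw [h, Units.smul_def, Units.val_neg, Units.val_one, neg_smul, one_smul]
        exact neg_eq' K _
    · intro σ _ hσ
      rw [hterm, if_neg]
      intro hc
      have heq : p ∘ σ = p ∘ Tuple.sort p :=
        Tuple.unique_monotone hc.monotone (Tuple.monotone_sort p)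
      exact hσ (Equiv.ext fun i => hp (congrFun heq i))
    · intro h
      exact absurd (Finset.mem_univ _) h
  · have hns : ∀ σ : Equiv.Perm (Fin k), ¬ StrictMono (p ∘ σ) := by
      intro σ hc
      apply hp
      intro a a' haa
      have : (p ∘ σ) (σ.symm a) = (p ∘ σ) (σ.symm a') := by
        simp only [Function.comp_apply, Equiv.apply_symm_apply]
        exact (congrArg p (σ.apply_symm_apply a)).trans (haa.trans (congrArg p (σ.apply_symm_apply a')).symm)
      have := hc.injective this
      simpa using congrArg σ this
    obtain ⟨i, j, hij, hne⟩ := Function.not_injective_iff.mp hp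
    have hE : (E K V k) (fun i => b (p i)) = 0 :=
      (E K V k).map_eq_zero_of_eq _ (by rw [hij]) hne
    show _ = (E K V k) fun i => b (p i)
    rw [hE]
    refine Finset.sum_eq_zero fun σ _ => ?_
    rw [hterm, if_neg (hns σ)]

end CharTwoExtAux

open CharTwoExtAux

/-- Over a field of characteristic 2, the norm (symmetrization) map gives a well-defined
injective linear map `⋀^k V → V^{⊗k}` sending `v₁ ∧ ⋯ ∧ v_k` to
`∑_{σ ∈ S_k} v_{σ(1)} ⊗ ⋯ ⊗ v_{σ(k)}`. -/
theorem exteriorPower_embeds_in_tensorPower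
    (K V : Type) [Field K] [CharP K 2] [AddCommGroup V] [Module K V]
    [FiniteDimensional K V] (k : ℕ) :
    ∃ f : (⋀[K]^k V) →ₗ[K] (⨂[K]^k V),
      Function.Injective f ∧
      ∀ v : Fin k → V,
        f ⟨ExteriorAlgebra.ιMulti K k v,
            ExteriorAlgebra.ιMulti_range K k (Set.mem_range_self v)⟩ =
          ∑ σ : Equiv.Perm (Fin k), PiTensorProduct.tprod K (fun i => v (σ i)) := by
  classical
  set b := Module.finBasis K V with hb
  set F : ∀ i, V [⋀^Fin i]→ₗ[K] (⨂[K]^k V) :=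
    Function.update (fun _ => 0) k (PhiAlt K V k) with hF
  set f : (⋀[K]^k V) →ₗ[K] (⨂[K]^k V) :=
    (ExteriorAlgebra.liftAlternating F).comp (Submodule.subtype _) with hfdef
  have hf : ∀ (v : Fin k → V) (h : ExteriorAlgebra.ιMulti K k v ∈ ⋀[K]^k V),
      f ⟨ExteriorAlgebra.ιMulti K k v, h⟩ =
        ∑ σ : Equiv.Perm (Fin k), PiTensorProduct.tprod K (fun i => v (σ i)) := by
    intro v h
    show ExteriorAlgebra.liftAlternating F (ExteriorAlgebra.ιMulti K k v) = _
    rw [ExteriorAlgebra.liftAlternating_apply_ιMulti, hF, Function.update_self]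
    exact Phi_apply K V k v
  set g : (⨂[K]^k V) →ₗ[K] (⋀[K]^k V) := PiTensorProduct.lift (Gmap K V k b) with hg
  have hgf : ∀ x : ⋀[K]^k V, g (f x) = x := by
    rintro ⟨y, hy⟩
    have hy' : y ∈ Submodule.span K (Set.range (ExteriorAlgebra.ιMulti K k)) := by
      rw [ExteriorAlgebra.ιMulti_span_fixedDegree]; exact hy
    refine Submodule.span_induction
      (p := fun y _ => ∀ h2 : y ∈ ⋀[K]^k V, g (f ⟨y, h2⟩) = ⟨y, h2⟩) ?_ ?_ ?_ ?_ hy' hy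
    · rintro _ ⟨v, rfl⟩ h2
      rw [hf v h2, map_sum]
      have hterm : ∀ σ : Equiv.Perm (Fin k),
          g (PiTensorProduct.tprod K (fun i => v (σ i))) =
            (Gmap K V k b).domDomCongr σ v := by
        intro σ
        rw [hg, PiTensorProduct.lift.tprod]
        rfl
      simp_rw [hterm]
      rw [← MultilinearMap.sum_apply, key K V k b]
      exact Subtype.ext rfl
    · intro h2
      have : (⟨0, h2⟩ : ⋀[K]^k V) = 0 := Subtype.ext rfl
      rw [this, map_zero, map_zero]
    · intro x y hxs hys hx hy h2
      have hx2 : x ∈ ⋀[K]^k V := by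
        rw [← ExteriorAlgebra.ιMulti_span_fixedDegree]; exact hxs
      have hy2 : y ∈ ⋀[K]^k V := by
        rw [← ExteriorAlgebra.ιMulti_span_fixedDegree]; exact hys
      have : (⟨x + y, h2⟩ : ⋀[K]^k V) = ⟨x, hx2⟩ + ⟨y, hy2⟩ := Subtype.ext rfl
      rw [this, map_add, map_add, hx hx2, hy hy2]
    · intro a x hxs hx h2
      have hx2 : x ∈ ⋀[K]^k V := by
        rw [← ExteriorAlgebra.ιMulti_span_fixedDegree]; exact hxs
      have : (⟨a • x, h2⟩ : ⋀[K]^k V) = a • ⟨x, hx2⟩ := Subtype.ext rfl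
      rw [this, map_smul, map_smul, hx hx2]
  exact ⟨f, fun x y hxy => by rw [← hgf x, hxy, hgf y], fun v => hf v _⟩
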